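/- Let n : ℕ and let R ⊆ FreeGroup (Fin n) be a set of relators such that the presentation ⟨Fin n; R⟩ is recursively presented, i.e., REPred (fun l : List (Fin n × Bool) => FreeGroup.mk l ∈ R). Let as : Fin j → FreeGroup (Fin n) and bs : Fin k → FreeGroup (Fin n) be finite tuples generating subgroups A and B of the presented group. Then the 'yes' part of the decomposition problem with respect to A and B is recursively enumerable: REPred (fun p : List (Fin n × Bool) × List (Fin n × Bool) => ∃ x ∈ Subgroup.closure (Set.range as), ∃ y ∈ Subgroup.closure (Set.range bs), FreeGroup.mk p.1 * (x * FreeGroup.mk p.2 * y)⁻¹ ∈ Subgroup.normalClosure R). (The condition says that w₁ = x·w₂·y holds in the presented group for some x ∈ A, y ∈ B.) -/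

import Mathlib

section RELemmas

open Nat.Partrec (Code)
open Nat.Partrec.Code

variable {α : Type*} {β : Type*} [Primcodable α] [Primcodable β]

open Nat.Partrec (Code)
open Nat.Partrec.Code

variable {α : Type*} [Primcodable α]

/-- Build an RE predicate from a primrec witness search. -/
theorem rePred_of_exists {q : α → ℕ → Bool} (hq : Primrec₂ q)
    {p : α → Prop} (h : ∀ a, p a ↔ ∃ m, q a m = true) : REPred p := by
  have hq2 : Computable₂ q := hq.to_comp
  have hf : Partrec fun a => Nat.rfind (fun m => Part.some (q a m)) :=
    Partrec.rfind hq2.partrec₂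
  refine (hf.dom_re).of_eq fun a => ?_
  refine Nat.rfind_dom.trans ?_
  constructor
  · rintro ⟨m, hm, _⟩
    exact (h a).2 ⟨m, by simpa using hm⟩
  · rintro hp
    obtain ⟨m, hm⟩ := (h a).1 hp
    exact ⟨m, by simpa using hm, fun _ => trivial⟩

/-- Normal form of an RE predicate: monotone primrec witness. -/
theorem exists_of_rePred {p : α → Prop} (hp : REPred p) :
    ∃ q : α → ℕ → Bool, Primrec₂ q ∧
      (∀ a m m', m ≤ m' → q a m = true → q a m' = true) ∧
      (∀ a, p a ↔ ∃ m, q a m = true) := by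
  unfold REPred at hp
  -- hp : Partrec fun a => Part.assert (p a) fun _ => Part.some ()
  obtain ⟨c, hc⟩ := Nat.Partrec.Code.exists_code.1 hp
  refine ⟨fun a m => (evaln m c (Encodable.encode a)).isSome, ?_, ?_, ?_⟩
  · have := Nat.Partrec.Code.primrec_evaln
    exact (Primrec.option_isSome.comp
      (this.comp (((Primrec.snd).pair (Primrec.const c)).pair
        (Primrec.encode.comp Primrec.fst)))).to₂
  · intro a m m' hmm hq
    obtain ⟨x, hx⟩ := Option.isSome_iff_exists.1 hq
    exact Option.isSome_iff_exists.2 ⟨x, evaln_mono hmm hx⟩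
  · intro a
    have hdom : p a ↔ ((fun n => Part.bind (Encodable.decode (α := α) n)
        fun a => ((fun a => Part.assert (p a) fun _ => Part.some ()) a).map Encodable.encode)
        (Encodable.encode a)).Dom := by
      simp [Part.assert]
    rw [hdom, ← hc]
    rw [Part.dom_iff_mem]
    constructor
    · rintro ⟨x, hx⟩
      obtain ⟨m, hm⟩ := evaln_complete.1 hx
      exact ⟨m, Option.isSome_iff_exists.2 ⟨x, hm⟩⟩
    · rintro ⟨m, hm⟩
      obtain ⟨x, hx⟩ := Option.isSome_iff_exists.1 hm
      exact ⟨x, evaln_sound hx⟩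

/-- RE is closed under primrec precomposition. -/
theorem REPred.comp_primrec {p : β → Prop} (hp : REPred p) {f : α → β}
    (hf : Primrec f) : REPred fun a => p (f a) := by
  obtain ⟨q, hq, _, hiff⟩ := exists_of_rePred hp
  exact rePred_of_exists (hq.comp (hf.comp Primrec.fst) Primrec.snd).to₂
    (fun a => hiff (f a))

/-- RE is closed under existential quantification over a primcodable type. -/
theorem REPred.exists_re {p : α × β → Prop} (hp : REPred p) :
    REPred fun a => ∃ b, p (a, b) := by
  obtain ⟨q, hq, _, hiff⟩ := exists_of_rePred hp
  set q' : α → ℕ → Bool := fun a m =>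
    match Encodable.decode (α := β) m.unpair.1 with
    | some b => q (a, b) m.unpair.2
    | none => false with hq'def
  have hq' : Primrec₂ q' := by
    have H := Primrec.option_casesOn (α := α × ℕ) (β := β) (σ := Bool)
      (Primrec.decode.comp (Primrec.fst.comp (Primrec.unpair.comp Primrec.snd)))
      (Primrec.const false)
      ((hq.comp ((Primrec.fst.comp Primrec.fst).pair Primrec.snd)
        ((Primrec.snd.comp (Primrec.unpair.comp (Primrec.snd.comp Primrec.fst))))).to₂)
    refine H.to₂.of_eq fun a m => ?_
    simp only [hq'def]
    cases Encodable.decode (α := β) m.unpair.1 <;> rfl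
  refine rePred_of_exists hq' fun a => ?_
  constructor
  · rintro ⟨b, hb⟩
    obtain ⟨m, hm⟩ := (hiff (a, b)).1 hb
    refine ⟨Nat.pair (Encodable.encode b) m, ?_⟩
    simp [hq'def, Nat.unpair_pair, Encodable.encodek, hm]
  · rintro ⟨m, hm⟩
    simp only [hq'def] at hm
    rcases hd : Encodable.decode (α := β) m.unpair.1 with _ | b
    · rw [hd] at hm; simp at hm
    · rw [hd] at hm
      exact ⟨b, (hiff (a, b)).2 ⟨m.unpair.2, hm⟩⟩

/-- RE is closed under finitary (list) conjunction. -/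
theorem REPred.list_forall {p : α → Prop} (hp : REPred p) :
    REPred fun L : List α => ∀ a ∈ L, p a := by
  obtain ⟨q, hq, hmono, hiff⟩ := exists_of_rePred hp
  set q' : List α → ℕ → Bool := fun L m => L.all fun a => q a m with hq'def
  have hq' : Primrec₂ q' := by
    have H := Primrec.list_foldr (α := List α × ℕ) Primrec.fst (Primrec.const true)
      ((Primrec.cond
        (hq.comp (Primrec.fst.comp Primrec.snd) (Primrec.snd.comp Primrec.fst))
        (Primrec.snd.comp Primrec.snd) (Primrec.const false)).to₂)
    refine H.to₂.of_eq fun L m => ?_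
    simp only [hq'def]
    induction L with
    | nil => rfl
    | cons a L ih =>
      simp only [List.foldr_cons, ih, List.all_cons]
      cases q a m <;> simp
  refine rePred_of_exists hq' fun L => ?_
  simp only [hq'def, List.all_eq_true]
  constructor
  · intro hL
    induction L with
    | nil => exact ⟨0, by simp⟩
    | cons a L ih =>
      obtain ⟨m, hm⟩ := ih fun x hx => hL x (List.mem_cons_of_mem _ hx)
      obtain ⟨m', hm'⟩ := (hiff a).1 (hL a (List.mem_cons_self))
      refine ⟨max m m', ?_⟩
      intro x hx
      rcases List.mem_cons.1 hx with rfl | hx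
      · exact hmono x m' _ (le_max_right _ _) hm'
      · exact hmono x m _ (le_max_left _ _) (hm x hx)
  · rintro ⟨m, hm⟩ a ha
    exact (hiff a).2 ⟨m, hm a ha⟩

/-- RE is closed under binary conjunction. -/
theorem REPred.and {p q : α → Prop} (hp : REPred p) (hq : REPred q) :
    REPred fun a => p a ∧ q a := by
  obtain ⟨q₁, hq₁, hm₁, hi₁⟩ := exists_of_rePred hp
  obtain ⟨q₂, hq₂, hm₂, hi₂⟩ := exists_of_rePred hq
  refine rePred_of_exists
    ((Primrec.cond hq₁ hq₂ (Primrec.const false)).to₂) fun a => ?_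
  constructor
  · rintro ⟨h1, h2⟩
    obtain ⟨m1, hm⟩ := (hi₁ a).1 h1
    obtain ⟨m2, hm'⟩ := (hi₂ a).1 h2
    refine ⟨max m1 m2, ?_⟩
    rw [hm₁ a m1 _ (le_max_left _ _) hm, hm₂ a m2 _ (le_max_right _ _) hm']
    rfl
  · rintro ⟨m, hm⟩
    rcases h1 : q₁ a m with _ | _ <;> rw [h1] at hm
    · simp at hm
    · simp only [cond_true] at hm
      exact ⟨(hi₁ a).2 ⟨m, h1⟩, (hi₂ a).2 ⟨m, hm⟩⟩

end RELemmas

variable {G : Type*} [Group G]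

theorem mem_normalClosure_iff_list {S : Set G} {g : G} :
    g ∈ Subgroup.normalClosure S ↔
      ∃ L : List (G × G × Bool), (∀ e ∈ L, e.2.1 ∈ S) ∧
        (L.map fun e => e.1 * (cond e.2.2 e.2.1 e.2.1⁻¹) * e.1⁻¹).prod = g := by
  constructor
  · intro hg
    refine Subgroup.closure_induction ?_ ?_ ?_ ?_ hg
    · rintro x hx
      rw [Group.mem_conjugatesOfSet_iff] at hx
      obtain ⟨s, hs, hconj⟩ := hx
      obtain ⟨c, hc⟩ := isConj_iff.1 hconj
      refine ⟨[(c, s, true)], by simpa using hs, by simpa using hc⟩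
    · exact ⟨[], by simp, by simp⟩
    · rintro x y _ _ ⟨L₁, h₁, e₁⟩ ⟨L₂, h₂, e₂⟩
      refine ⟨L₁ ++ L₂, ?_, by simp [e₁, e₂]⟩
      intro e he
      rcases List.mem_append.1 he with h | h
      · exact h₁ e h
      · exact h₂ e h
    · rintro x _ ⟨L, h, e⟩
      refine ⟨L.reverse.map fun e => (e.1, e.2.1, !e.2.2), ?_, ?_⟩
      · intro e he
        simp only [List.mem_map, List.mem_reverse] at he
        obtain ⟨e', he', rfl⟩ := he
        exact h e' he'
      · subst e
        rw [List.prod_inv_reverse]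
        simp only [List.map_reverse, List.map_map]
        refine congrArg List.prod (congrArg List.reverse
          (congrFun (congrArg List.map ?_) _))
        funext e
        cases hb : e.2.2 <;> simp [Function.comp, hb, mul_assoc]
  · rintro ⟨L, hL, rfl⟩
    refine Subgroup.list_prod_mem _ fun x hx => ?_
    simp only [List.mem_map] at hx
    obtain ⟨e, he, rfl⟩ := hx
    have hs : e.2.1 ∈ Subgroup.normalClosure S := Subgroup.subset_normalClosure (hL e he)
    have : (cond e.2.2 e.2.1 e.2.1⁻¹) ∈ Subgroup.normalClosure S := by
      cases e.2.2 <;> simp [hs, inv_mem hs]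
    exact Subgroup.Normal.conj_mem (Subgroup.normalClosure_normal) _ this e.1

namespace DecompAux

variable {n : ℕ}

abbrev W (n : ℕ) := List (Fin n × Bool)

theorem primrec_reduce : Primrec (FreeGroup.reduce (α := Fin n)) := by
  have hh : Primrec₂ fun (x : (Fin n × Bool) × W n × W n) (y : (Fin n × Bool) × W n) =>
      (if x.1.1 = y.1.1 ∧ x.1.2 = !y.1.2 then y.2 else x.1 :: y.1 :: y.2 : W n) := by
    have hif : Primrec fun z : ((Fin n × Bool) × W n × W n) × ((Fin n × Bool) × W n) =>
        (if z.1.1.1 = z.2.1.1 ∧ z.1.1.2 = !z.2.1.2 then z.2.2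
          else z.1.1 :: z.2.1 :: z.2.2 : W n) := by
      refine Primrec.ite ?_ (Primrec.snd.comp Primrec.snd)
        (Primrec.list_cons.comp (Primrec.fst.comp Primrec.fst)
          (Primrec.list_cons.comp (Primrec.fst.comp Primrec.snd)
            (Primrec.snd.comp Primrec.snd)))
      refine PrimrecPred.and ?_ ?_
      · exact Primrec.eq.comp
          (Primrec.fst.comp (Primrec.fst.comp Primrec.fst))
          (Primrec.fst.comp (Primrec.fst.comp Primrec.snd))
      · exact Primrec.eq.comp
          (Primrec.snd.comp (Primrec.fst.comp Primrec.fst))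
          ((Primrec.dom_bool (fun b => !b)).comp
            (Primrec.snd.comp (Primrec.fst.comp Primrec.snd)))
    exact hif.to₂
  have h0 : Primrec fun x : (Fin n × Bool) × W n × W n =>
      (List.casesOn x.2.2 [x.1] fun hd2 tl2 =>
        if x.1.1 = hd2.1 ∧ x.1.2 = !hd2.2 then tl2 else x.1 :: hd2 :: tl2 : W n) := by
    refine Primrec.list_casesOn
      (f := fun x : (Fin n × Bool) × W n × W n => x.2.2)
      (g := fun x : (Fin n × Bool) × W n × W n => [x.1])
      (h := fun (x : (Fin n × Bool) × W n × W n) (y : (Fin n × Bool) × W n) =>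
        if x.1.1 = y.1.1 ∧ x.1.2 = !y.1.2 then y.2 else x.1 :: y.1 :: y.2)
      (Primrec.snd.comp Primrec.snd)
      (Primrec.list_cons.comp Primrec.fst (Primrec.const []))
      hh
  have H := Primrec.list_rec (Primrec.id (α := W n)) (Primrec.const ([] : W n))
    ((h0.comp Primrec.snd).to₂)
  refine H.of_eq fun L => ?_
  induction L with
  | nil => rfl
  | cons a L ih => rw [FreeGroup.reduce.cons, ← ih]; rfl

theorem primrec_invRev : Primrec (FreeGroup.invRev (α := Fin n)) := by
  have : Primrec fun L : W n => (L.map fun x => (x.1, !x.2)).reverse :=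
    Primrec.list_reverse.comp (Primrec.list_map Primrec.id
      ((Primrec.fst.pair ((Primrec.dom_bool (fun b => !b)).comp Primrec.snd)).comp
        Primrec.snd).to₂)
  exact this.of_eq fun L => rfl

/-- The word of a product of conjugates described by a list of triples. -/
def conjProd (L : List (W n × W n × Bool)) : W n :=
  (L.map fun e => e.1 ++ (cond e.2.2 e.2.1 (FreeGroup.invRev e.2.1)) ++
    FreeGroup.invRev e.1).flatten

theorem primrec_conjProd : Primrec (conjProd (n := n)) := by
  have h1 : Primrec fun x : List (W n × W n × Bool) × (W n × W n × Bool) => x.2.1 :=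
    Primrec.fst.comp Primrec.snd
  have h2 : Primrec fun x : List (W n × W n × Bool) × (W n × W n × Bool) =>
      (cond x.2.2.2 x.2.2.1 (FreeGroup.invRev x.2.2.1)) :=
    Primrec.cond (Primrec.snd.comp (Primrec.snd.comp Primrec.snd))
      (Primrec.fst.comp (Primrec.snd.comp Primrec.snd))
      (primrec_invRev.comp (Primrec.fst.comp (Primrec.snd.comp Primrec.snd)))
  have h : Primrec fun x : List (W n × W n × Bool) × (W n × W n × Bool) =>
      x.2.1 ++ (cond x.2.2.2 x.2.2.1 (FreeGroup.invRev x.2.2.1)) ++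
        FreeGroup.invRev x.2.1 :=
    Primrec.list_append.comp (Primrec.list_append.comp h1 h2) (primrec_invRev.comp h1)
  exact Primrec.list_flatten.comp (Primrec.list_map Primrec.id h.to₂)

theorem mk_conjProd (L : List (W n × W n × Bool)) :
    FreeGroup.mk (conjProd L) =
      (L.map fun e => FreeGroup.mk e.1 *
        (cond e.2.2 (FreeGroup.mk e.2.1) (FreeGroup.mk e.2.1)⁻¹) *
        (FreeGroup.mk e.1)⁻¹).prod := by
  induction L with
  | nil => rfl
  | cons a L ih =>
    have h1 : FreeGroup.mk (conjProd (a :: L)) =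
        FreeGroup.mk (a.1 ++ (cond a.2.2 a.2.1 (FreeGroup.invRev a.2.1)) ++
          FreeGroup.invRev a.1) * FreeGroup.mk (conjProd L) := by
      rw [FreeGroup.mul_mk]; rfl
    rw [List.map_cons, List.prod_cons, h1, ih]
    congr 1
    cases a.2.2 <;> simp only [cond_true, cond_false] <;>
      simp only [FreeGroup.inv_mk, FreeGroup.mul_mk]

theorem reduce_eq_nil_iff {u : W n} : FreeGroup.reduce u = [] ↔ FreeGroup.mk u = 1 := by
  rw [← FreeGroup.toWord_mk, FreeGroup.toWord_eq_nil_iff]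

theorem mk_mem_normalClosure_iff {R : Set (FreeGroup (Fin n))} {w : W n} :
    FreeGroup.mk w ∈ Subgroup.normalClosure R ↔
      ∃ L : List (W n × W n × Bool), (∀ e ∈ L, FreeGroup.mk e.2.1 ∈ R) ∧
        FreeGroup.reduce (w ++ FreeGroup.invRev (conjProd L)) = [] := by
  constructor
  · intro hw
    obtain ⟨L', hL', hprod⟩ := mem_normalClosure_iff_list.1 hw
    refine ⟨L'.map fun e => (e.1.toWord, e.2.1.toWord, e.2.2), ?_, ?_⟩
    · intro e he
      simp only [List.mem_map] at he
      obtain ⟨e', h', rfl⟩ := he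
      simpa only [FreeGroup.mk_toWord] using hL' e' h'
    · rw [reduce_eq_nil_iff, ← FreeGroup.mul_mk, ← FreeGroup.inv_mk, mk_conjProd]
      have : ((L'.map fun e => ((e.1.toWord : W n), e.2.1.toWord, e.2.2)).map
          fun e => FreeGroup.mk e.1 *
            (cond e.2.2 (FreeGroup.mk e.2.1) (FreeGroup.mk e.2.1)⁻¹) *
            (FreeGroup.mk e.1)⁻¹).prod =
          (L'.map fun e => e.1 * (cond e.2.2 e.2.1 e.2.1⁻¹) * e.1⁻¹).prod := by
        rw [List.map_map]
        congr 1
        refine congrFun (congrArg List.map ?_) _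
        funext e
        simp [Function.comp, FreeGroup.mk_toWord]
      rw [this, hprod, mul_inv_cancel]
  · rintro ⟨L, hL, hred⟩
    rw [reduce_eq_nil_iff, ← FreeGroup.mul_mk, ← FreeGroup.inv_mk] at hred
    have heq : FreeGroup.mk w = FreeGroup.mk (conjProd L) := by
      rw [← mul_inv_eq_one]; exact hred
    rw [heq, mk_conjProd]
    refine mem_normalClosure_iff_list.2
      ⟨L.map fun e => (FreeGroup.mk e.1, FreeGroup.mk e.2.1, e.2.2), ?_, ?_⟩
    · intro e he
      simp only [List.mem_map] at he
      obtain ⟨e', h', rfl⟩ := he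
      exact hL e' h'
    · rw [List.map_map]; rfl

/-- Word-level realization of `FreeGroup.lift`. -/
def liftWord {j : ℕ} (as : Fin j → FreeGroup (Fin n)) (u : List (Fin j × Bool)) : W n :=
  (u.map fun x => cond x.2 (as x.1).toWord (FreeGroup.invRev (as x.1).toWord)).flatten

theorem primrec_liftWord {j : ℕ} (as : Fin j → FreeGroup (Fin n)) :
    Primrec (liftWord as) :=
  Primrec.list_flatten.comp (Primrec.list_map Primrec.id
    ((Primrec.dom_finite
      (fun x : Fin j × Bool => cond x.2 (as x.1).toWord
        (FreeGroup.invRev (as x.1).toWord))).comp Primrec.snd).to₂)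

theorem mk_liftWord {j : ℕ} (as : Fin j → FreeGroup (Fin n))
    (u : List (Fin j × Bool)) :
    FreeGroup.mk (liftWord as u) = FreeGroup.lift as (FreeGroup.mk u) := by
  induction u with
  | nil => rfl
  | cons x u ih =>
    have hsplit : FreeGroup.mk (x :: u) = FreeGroup.mk [x] * FreeGroup.mk u := by
      rw [FreeGroup.mul_mk]; rfl
    have h1 : FreeGroup.mk (liftWord as (x :: u)) =
        FreeGroup.mk (cond x.2 (as x.1).toWord (FreeGroup.invRev (as x.1).toWord)) *
          FreeGroup.mk (liftWord as u) := by
      rw [FreeGroup.mul_mk]; rfl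
    rw [h1, ih, hsplit, map_mul]
    congr 1
    have hofx : ∀ i : Fin j, FreeGroup.mk [((i : Fin j), true)] = FreeGroup.of i :=
      fun i => rfl
    rcases x with ⟨i, _ | _⟩
    · have : FreeGroup.mk [((i : Fin j), false)] = (FreeGroup.of i)⁻¹ := by
        rw [← hofx i, FreeGroup.inv_mk]; rfl
      rw [cond_false, ← FreeGroup.toWord_inv, FreeGroup.mk_toWord, this, map_inv,
        FreeGroup.lift_apply_of]
    · rw [cond_true, FreeGroup.mk_toWord, hofx, FreeGroup.lift_apply_of]

theorem mem_closure_range_iff {j : ℕ} (as : Fin j → FreeGroup (Fin n))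
    (x : FreeGroup (Fin n)) :
    x ∈ Subgroup.closure (Set.range as) ↔
      ∃ u : List (Fin j × Bool), x = FreeGroup.mk (liftWord as u) := by
  rw [← FreeGroup.range_lift_eq_closure, MonoidHom.mem_range]
  constructor
  · rintro ⟨g, rfl⟩
    exact ⟨g.toWord, by rw [mk_liftWord, FreeGroup.mk_toWord]⟩
  · rintro ⟨u, rfl⟩
    exact ⟨FreeGroup.mk u, (mk_liftWord as u).symm⟩

end DecompAux

open DecompAux
/-- The "yes" part of the decomposition problem with respect to two finitely
generated subgroups of a recursively presented group `⟨Fin n; R⟩` is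
recursively enumerable. -/
theorem decomposition_problem_yes_part_re (n : ℕ) (R : Set (FreeGroup (Fin n)))
    (hR : REPred (fun l : List (Fin n × Bool) => FreeGroup.mk l ∈ R))
    (j k : ℕ) (as : Fin j → FreeGroup (Fin n)) (bs : Fin k → FreeGroup (Fin n)) :
    REPred (fun p : List (Fin n × Bool) × List (Fin n × Bool) =>
      ∃ x ∈ Subgroup.closure (Set.range as), ∃ y ∈ Subgroup.closure (Set.range bs),
        FreeGroup.mk p.1 * (x * FreeGroup.mk p.2 * y)⁻¹ ∈
          Subgroup.normalClosure R) := by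
  classical
  -- The membership-in-normal-closure predicate on words is r.e.
  have hQ : REPred (fun w : W n => FreeGroup.mk w ∈ Subgroup.normalClosure R) := by
    have hA : REPred (fun z : W n × List (W n × W n × Bool) =>
        ∀ e ∈ z.2, FreeGroup.mk e.2.1 ∈ R) :=
      (REPred.list_forall (hR.comp_primrec (Primrec.fst.comp Primrec.snd))).comp_primrec
        Primrec.snd
    have hBpr : PrimrecPred (fun z : W n × List (W n × W n × Bool) =>
        FreeGroup.reduce (z.1 ++ FreeGroup.invRev (conjProd z.2)) = []) :=
      Primrec.eq.comp
        (primrec_reduce.comp (Primrec.list_append.comp Primrec.fst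
          (primrec_invRev.comp (primrec_conjProd.comp Primrec.snd))))
        (Primrec.const [])
    have hB : REPred (fun z : W n × List (W n × W n × Bool) =>
        FreeGroup.reduce (z.1 ++ FreeGroup.invRev (conjProd z.2)) = []) :=
      ComputablePred.to_re hBpr.computablePred
    have h2 : REPred (fun z : W n × List (W n × W n × Bool) =>
        (∀ e ∈ z.2, FreeGroup.mk e.2.1 ∈ R) ∧
          FreeGroup.reduce (z.1 ++ FreeGroup.invRev (conjProd z.2)) = []) :=
      hA.and hB
    exact h2.exists_re.of_eq fun w => (mk_mem_normalClosure_iff (R := R)).symm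
  -- The word-level combination map is primitive recursive.
  set F : (W n × W n) × (List (Fin j × Bool) × List (Fin k × Bool)) → W n :=
    fun z => z.1.1 ++ FreeGroup.invRev
      (liftWord as z.2.1 ++ z.1.2 ++ liftWord bs z.2.2) with hF
  have hFpr : Primrec F := by
    refine Primrec.list_append.comp (Primrec.fst.comp Primrec.fst)
      (primrec_invRev.comp (Primrec.list_append.comp (Primrec.list_append.comp
        ((primrec_liftWord as).comp (Primrec.fst.comp Primrec.snd))
        (Primrec.snd.comp Primrec.fst))
        ((primrec_liftWord bs).comp (Primrec.snd.comp Primrec.snd))))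
  have hmkF : ∀ z, FreeGroup.mk (F z) =
      FreeGroup.mk z.1.1 * (FreeGroup.mk (liftWord as z.2.1) * FreeGroup.mk z.1.2 *
        FreeGroup.mk (liftWord bs z.2.2))⁻¹ := by
    intro z
    rw [hF]
    simp only [← FreeGroup.mul_mk, ← FreeGroup.inv_mk]
  have hcomp : REPred (fun z : (W n × W n) ×
      (List (Fin j × Bool) × List (Fin k × Bool)) =>
      FreeGroup.mk (F z) ∈ Subgroup.normalClosure R) := hQ.comp_primrec hFpr
  refine hcomp.exists_re.of_eq fun p => ?_
  constructor
  · rintro ⟨uv, huv⟩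
    rw [hmkF] at huv
    exact ⟨FreeGroup.mk (liftWord as uv.1),
      (mem_closure_range_iff as _).2 ⟨uv.1, rfl⟩,
      FreeGroup.mk (liftWord bs uv.2),
      (mem_closure_range_iff bs _).2 ⟨uv.2, rfl⟩, huv⟩
  · rintro ⟨x, hx, y, hy, hmem⟩
    obtain ⟨u, rfl⟩ := (mem_closure_range_iff as x).1 hx
    obtain ⟨v, rfl⟩ := (mem_closure_range_iff bs y).1 hy
    exact ⟨(u, v), by rw [hmkF]; exact hmem⟩
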